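/- Consider the nonlocal wave equation ρ ∂²_t u = L u on Ω × (0,T] with homogeneous volume constraint u = 0 on Ω_I and γ ≥ 0 symmetric, L as above. Then the total energy E(t) = (1/2)∫_Ω ρ (∂_t u)² dx + (1/2)∫∫_{(Ω∪Ω_I)²} (u(y,t)-u(x,t))² γ(x,y) dy dx is conserved: dE/dt = 0 for all t ∈ (0,T). -/

import Mathlib

open MeasureTheory

/-- Energy conservation for the homogeneous nonlocal wave equation
`ρ ∂²_t u = L_δ u` with homogeneous volume constraint: the total energy
`E(t) = (1/2)∫_Ω ρ (∂_t u)² + (1/2)∫∫ (u(y,t)-u(x,t))² γ(x,y)` satisfies `E'(t) = 0`. -/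
theorem nonlocal_wave_energy_conservation
    {d : ℕ} (Ω ΩI : Set (EuclideanSpace ℝ (Fin d)))
    (hΩ : MeasurableSet Ω) (hΩI : MeasurableSet ΩI)
    (hdisj : Disjoint Ω ΩI)
    (hfin : volume (Ω ∪ ΩI) < ⊤)
    (γ : EuclideanSpace ℝ (Fin d) → EuclideanSpace ℝ (Fin d) → ℝ)
    (hγmeas : Measurable (Function.uncurry γ))
    (hγnonneg : ∀ x y, 0 ≤ γ x y)
    (hγsymm : ∀ x y, γ x y = γ y x)
    (hγbdd : ∃ K, ∀ x, (∫ y in Ω ∪ ΩI, γ x y) ≤ K)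
    (hγint : IntegrableOn (fun p : EuclideanSpace ℝ (Fin d) × EuclideanSpace ℝ (Fin d) =>
      γ p.1 p.2) ((Ω ∪ ΩI) ×ˢ (Ω ∪ ΩI)))
    (ρ T : ℝ) (hρ : 0 < ρ) (hT : 0 < T)
    (u v : ℝ → EuclideanSpace ℝ (Fin d) → ℝ)
    (humeas : ∀ t, Measurable (u t)) (hvmeas : ∀ t, Measurable (v t))
    (hubdd : ∃ M, ∀ t ∈ Set.Icc (0:ℝ) T, ∀ x, |u t x| ≤ M)
    (hvbdd : ∃ M, ∀ t ∈ Set.Icc (0:ℝ) T, ∀ x, |v t x| ≤ M)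
    (hvcont : ∀ x, ContinuousOn (fun τ => v τ x) (Set.Icc 0 T))
    (huI : ∀ t ∈ Set.Icc (0:ℝ) T, ∀ x ∈ ΩI, u t x = 0)
    (hvel : ∀ t ∈ Set.Ioo (0:ℝ) T, ∀ x, HasDerivAt (fun τ => u τ x) (v t x) t)
    (heq : ∀ t ∈ Set.Ioo (0:ℝ) T, ∀ x ∈ Ω,
      HasDerivAt (fun τ => v τ x)
        ((1/ρ) * (2 * ∫ y in Ω ∪ ΩI, (u t y - u t x) * γ x y)) t) :
    ∀ t ∈ Set.Ioo (0:ℝ) T,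
      HasDerivAt
        (fun τ => (1/2) * (∫ x in Ω, ρ * (v τ x) ^ 2)
          + (1/2) * ∫ x in Ω ∪ ΩI, ∫ y in Ω ∪ ΩI, (u τ y - u τ x) ^ 2 * γ x y)
        0 t := by
  obtain ⟨K, hK⟩ := hγbdd
  obtain ⟨M, hM⟩ := hubdd
  obtain ⟨N, hN⟩ := hvbdd
  intro t ht
  have ht' : t ∈ Set.Icc (0:ℝ) T := ⟨ht.1.le, ht.2.le⟩
  set S : Set (EuclideanSpace ℝ (Fin d)) := Ω ∪ ΩI with hSdef
  have hSmeas : MeasurableSet S := hΩ.union hΩI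
  have hΩS : Ω ⊆ S := Set.subset_union_left
  have hΩIS : ΩI ⊆ S := Set.subset_union_right
  have hM0 : 0 ≤ M := (abs_nonneg _).trans (hM 0 (Set.left_mem_Icc.2 hT.le) 0)
  have hN0 : 0 ≤ N := (abs_nonneg _).trans (hN 0 (Set.left_mem_Icc.2 hT.le) 0)
  have hK0 : 0 ≤ K := le_trans (integral_nonneg fun y => hγnonneg 0 y) (hK 0)
  haveI hfinS : IsFiniteMeasure (volume.restrict S) :=
    ⟨by rw [Measure.restrict_apply_univ]; exact hfin⟩
  haveI hfinΩ : IsFiniteMeasure (volume.restrict Ω) :=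
    ⟨by rw [Measure.restrict_apply_univ]; exact lt_of_le_of_lt (measure_mono hΩS) hfin⟩
  -- the ball around t
  set ε : ℝ := min t (T - t) with hεdef
  have hε : 0 < ε := lt_min ht.1 (sub_pos.2 ht.2)
  have hball : ∀ τ ∈ Metric.ball t ε, τ ∈ Set.Ioo (0:ℝ) T := by
    intro τ hτ
    rw [Metric.mem_ball, Real.dist_eq, abs_lt] at hτ
    have h1 : ε ≤ t := min_le_left _ _
    have h2 : ε ≤ T - t := min_le_right _ _
    constructor <;> [linarith [hτ.1]; linarith [hτ.2]]
  have hballIcc : ∀ τ ∈ Metric.ball t ε, τ ∈ Set.Icc (0:ℝ) T := fun τ hτ =>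
    ⟨(hball τ hτ).1.le, (hball τ hτ).2.le⟩
  -- the nonlocal operator integral
  set I : ℝ → EuclideanSpace ℝ (Fin d) → ℝ :=
    fun τ x => ∫ y in S, (u τ y - u τ x) * γ x y with hIdef
  -- measurability of I
  have hImeas : ∀ τ, StronglyMeasurable (I τ) := by
    intro τ
    have hm : Measurable (fun p : EuclideanSpace ℝ (Fin d) × EuclideanSpace ℝ (Fin d) =>
        (u τ p.2 - u τ p.1) * γ p.1 p.2) :=
      (((humeas τ).comp measurable_snd).sub ((humeas τ).comp measurable_fst)).mul hγmeas
    exact hm.stronglyMeasurable.integral_prod_right'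
  -- γ is integrable with respect to the product of restricted measures
  set μP : Measure (EuclideanSpace ℝ (Fin d) × EuclideanSpace ℝ (Fin d)) :=
    (volume.restrict S).prod (volume.restrict S) with hμPdef
  have hγP : Integrable (fun p : EuclideanSpace ℝ (Fin d) × EuclideanSpace ℝ (Fin d) =>
      γ p.1 p.2) μP := by
    rw [hμPdef, Measure.prod_restrict]
    exact hγint
  have hγae : ∀ᵐ x ∂(volume.restrict S), Integrable (fun y => γ x y) (volume.restrict S) :=
    hγP.prod_right_ae
  -- bound on I
  have hIbound : ∀ τ ∈ Set.Icc (0:ℝ) T, ∀ x,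
      Integrable (fun y => γ x y) (volume.restrict S) → |I τ x| ≤ 2 * M * K := by
    intro τ hτ x hx
    have h1 : ∀ y, ‖(u τ y - u τ x) * γ x y‖ ≤ 2 * M * γ x y := by
      intro y
      rw [norm_mul, Real.norm_eq_abs, Real.norm_eq_abs, abs_of_nonneg (hγnonneg x y)]
      refine mul_le_mul_of_nonneg_right ?_ (hγnonneg x y)
      calc |u τ y - u τ x| ≤ |u τ y| + |u τ x| := abs_sub _ _
        _ ≤ 2 * M := by linarith [hM τ hτ y, hM τ hτ x]
    calc |I τ x| ≤ ∫ y in S, 2 * M * γ x y :=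
          norm_integral_le_of_norm_le (hx.const_mul _) (Filter.Eventually.of_forall h1)
      _ = 2 * M * ∫ y in S, γ x y := MeasureTheory.integral_const_mul _ _
      _ ≤ 2 * M * K := by
          refine mul_le_mul_of_nonneg_left ?_ (by positivity)
          rw [hSdef]; exact hK x
  ------------------------------------------------------------------
  -- Part 1: kinetic energy
  ------------------------------------------------------------------
  set FK' : ℝ → EuclideanSpace ℝ (Fin d) → ℝ :=
    fun τ x => ρ * (2 * v τ x ^ 1 * ((1/ρ) * (2 * I τ x))) with hFK'def
  have hKres := hasDerivAt_integral_of_dominated_loc_of_deriv_le (μ := volume.restrict Ω)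
    (F := fun τ x => ρ * (v τ x) ^ 2) (F' := FK')
    (bound := fun _ => ρ * (2 * N * ((1/ρ) * (2 * (2 * M * K))))) (Metric.ball_mem_nhds t hε)
    (Filter.Eventually.of_forall fun τ =>
      (((hvmeas τ).pow_const 2).const_mul ρ).aestronglyMeasurable)
    (by
      refine ⟨((hvmeas t).pow_const 2 |>.const_mul ρ).aestronglyMeasurable, ?_⟩
      refine HasFiniteIntegral.of_bounded (C := ρ * N ^ 2) ?_
      refine Filter.Eventually.of_forall fun x => ?_
      rw [Real.norm_eq_abs, abs_mul, abs_of_pos hρ, abs_pow, sq_abs, ← sq_abs]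
      refine mul_le_mul_of_nonneg_left ?_ hρ.le
      exact pow_le_pow_left₀ (abs_nonneg _) (hN t ht' x) 2)
    (by
      refine Measurable.aestronglyMeasurable ?_
      exact (((hvmeas t).pow_const 1 |>.const_mul 2).mul
        (((hImeas t).measurable.const_mul 2).const_mul (1/ρ))).const_mul ρ)
    (by
      have h := ae_restrict_of_ae_restrict_of_subset hΩS hγae
      filter_upwards [h] with x hx
      intro τ hτ
      have hv' : |v τ x| ≤ N := hN τ (hballIcc τ hτ) x
      have hI' : |I τ x| ≤ 2 * M * K := hIbound τ (hballIcc τ hτ) x hx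
      rw [hFK'def, Real.norm_eq_abs]
      have hrw : |ρ * (2 * v τ x ^ 1 * ((1/ρ) * (2 * I τ x)))|
          = ρ * (2 * |v τ x| * ((1/ρ) * (2 * |I τ x|))) := by
        rw [pow_one, abs_mul, abs_mul, abs_mul, abs_mul, abs_two, abs_of_pos hρ,
          abs_of_pos (one_div_pos.2 hρ), abs_mul, abs_two]
      rw [hrw]
      gcongr)
    (integrable_const _)
    (by
      filter_upwards [ae_restrict_mem hΩ] with x hx
      intro τ hτ
      have hd := (heq τ (hball τ hτ) x hx).pow 2 |>.const_mul ρ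
      convert hd using 1
      show ρ * (2 * v τ x ^ 1 * ((1/ρ) * (2 * I τ x)))
        = ρ * (((2:ℕ):ℝ) * v τ x ^ (2 - 1) * ((1/ρ) * (2 * I τ x)))
      norm_num
      all_goals rfl)
  obtain ⟨hFK'int, hKder⟩ := hKres
  ------------------------------------------------------------------
  -- Part 2: potential energy (as an integral over the product space)
  ------------------------------------------------------------------
  set G : ℝ → EuclideanSpace ℝ (Fin d) × EuclideanSpace ℝ (Fin d) → ℝ :=
    fun τ p => (u τ p.2 - u τ p.1) ^ 2 * γ p.1 p.2 with hGdef
  set G' : ℝ → EuclideanSpace ℝ (Fin d) × EuclideanSpace ℝ (Fin d) → ℝ :=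
    fun τ p => 2 * (u τ p.2 - u τ p.1) ^ 1 * (v τ p.2 - v τ p.1) * γ p.1 p.2 with hG'def
  have hGmeas : ∀ τ, Measurable (G τ) := by
    intro τ
    exact ((((humeas τ).comp measurable_snd).sub ((humeas τ).comp measurable_fst)).pow_const 2).mul
      hγmeas
  have hGint : ∀ τ ∈ Set.Icc (0:ℝ) T, Integrable (G τ) μP := by
    intro τ hτ
    refine Integrable.mono (hγP.const_mul ((2*M)^2)) (hGmeas τ).aestronglyMeasurable
      (Filter.Eventually.of_forall fun p => ?_)
    rw [hGdef, Real.norm_eq_abs, Real.norm_eq_abs, abs_mul, abs_mul,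
      abs_of_nonneg (hγnonneg _ _)]
    refine mul_le_mul_of_nonneg_right ?_ (hγnonneg _ _)
    calc |(u τ p.2 - u τ p.1) ^ 2| = |u τ p.2 - u τ p.1| ^ 2 := abs_pow _ _
      _ ≤ (2*M)^2 := by
          refine pow_le_pow_left₀ (abs_nonneg _) ?_ 2
          calc |u τ p.2 - u τ p.1| ≤ |u τ p.2| + |u τ p.1| := abs_sub _ _
            _ ≤ 2 * M := by linarith [hM τ hτ p.2, hM τ hτ p.1]
      _ ≤ |(2*M)^2| := le_abs_self _
  have hG'meas : ∀ τ, Measurable (G' τ) := by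
    intro τ
    exact (((((humeas τ).comp measurable_snd).sub ((humeas τ).comp measurable_fst)).pow_const 1
      |>.const_mul 2).mul (((hvmeas τ).comp measurable_snd).sub
      ((hvmeas τ).comp measurable_fst))).mul hγmeas
  have hPres := hasDerivAt_integral_of_dominated_loc_of_deriv_le (μ := μP)
    (F := G) (F' := G')
    (bound := fun p => 2 * (2 * M) * (2 * N) * γ p.1 p.2) (Metric.ball_mem_nhds t hε)
    (Filter.Eventually.of_forall fun τ => (hGmeas τ).aestronglyMeasurable)
    (hGint t ht')
    ((hG'meas t).aestronglyMeasurable)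
    (by
      refine Filter.Eventually.of_forall fun p => ?_
      intro τ hτ
      have hu2 : |u τ p.2 - u τ p.1| ≤ 2 * M := by
        calc |u τ p.2 - u τ p.1| ≤ |u τ p.2| + |u τ p.1| := abs_sub _ _
          _ ≤ 2 * M := by
            linarith [hM τ (hballIcc τ hτ) p.2, hM τ (hballIcc τ hτ) p.1]
      have hv2 : |v τ p.2 - v τ p.1| ≤ 2 * N := by
        calc |v τ p.2 - v τ p.1| ≤ |v τ p.2| + |v τ p.1| := abs_sub _ _
          _ ≤ 2 * N := by
            linarith [hN τ (hballIcc τ hτ) p.2, hN τ (hballIcc τ hτ) p.1]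
      rw [hG'def, Real.norm_eq_abs]
      have hrw : |2 * (u τ p.2 - u τ p.1) ^ 1 * (v τ p.2 - v τ p.1) * γ p.1 p.2|
          = 2 * |u τ p.2 - u τ p.1| * |v τ p.2 - v τ p.1| * γ p.1 p.2 := by
        rw [pow_one, abs_mul, abs_mul, abs_mul, abs_two, abs_of_nonneg (hγnonneg _ _)]
      rw [hrw]
      have hstep : 2 * |u τ p.2 - u τ p.1| * |v τ p.2 - v τ p.1| ≤ 2 * (2*M) * (2*N) :=
        mul_le_mul (mul_le_mul_of_nonneg_left hu2 (by norm_num)) hv2 (abs_nonneg _)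
          (by positivity)
      exact mul_le_mul_of_nonneg_right hstep (hγnonneg _ _))
    (hγP.const_mul _)
    (by
      refine Filter.Eventually.of_forall fun p => ?_
      intro τ hτ
      have hd := (((hvel τ (hball τ hτ) p.2).sub (hvel τ (hball τ hτ) p.1)).pow 2).mul_const
        (γ p.1 p.2)
      convert hd using 1
      show 2 * (u τ p.2 - u τ p.1) ^ 1 * (v τ p.2 - v τ p.1) * γ p.1 p.2
        = ((2:ℕ):ℝ) * (u τ p.2 - u τ p.1) ^ (2 - 1) * (v τ p.2 - v τ p.1) * γ p.1 p.2
      norm_num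
      all_goals rfl)
  obtain ⟨hG'int, hPder⟩ := hPres
  ------------------------------------------------------------------
  -- v vanishes on ΩI
  ------------------------------------------------------------------
  have hvI : ∀ x ∈ ΩI, v t x = 0 := by
    intro x hx
    have h0 : HasDerivAt (fun σ => u σ x) 0 t := by
      have he : (fun σ => u σ x) =ᶠ[nhds t] fun _ => (0:ℝ) := by
        filter_upwards [Ioo_mem_nhds ht.1 ht.2] with σ hσ
        exact huI σ ⟨hσ.1.le, hσ.2.le⟩ x hx
      exact (hasDerivAt_const t (0:ℝ)).congr_of_eventuallyEq he
    exact (hvel t ht x).unique h0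
  ------------------------------------------------------------------
  -- identify the derivative of the potential part
  ------------------------------------------------------------------
  set f₁ : EuclideanSpace ℝ (Fin d) × EuclideanSpace ℝ (Fin d) → ℝ :=
    fun p => (2 * (u t p.2 - u t p.1) * v t p.2) * γ p.1 p.2 with hf₁def
  set f₂ : EuclideanSpace ℝ (Fin d) × EuclideanSpace ℝ (Fin d) → ℝ :=
    fun p => (2 * v t p.1) * ((u t p.2 - u t p.1) * γ p.1 p.2) with hf₂def
  have hf₁meas : Measurable f₁ := by
    exact (((((humeas t).comp measurable_snd).sub ((humeas t).comp measurable_fst)).const_mul 2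
      ).mul ((hvmeas t).comp measurable_snd)).mul hγmeas
  have hf₂meas : Measurable f₂ := by
    exact (((hvmeas t).comp measurable_fst).const_mul 2).mul
      ((((humeas t).comp measurable_snd).sub ((humeas t).comp measurable_fst)).mul hγmeas)
  have hbnd : ∀ (a b c : ℝ), |a| ≤ 2*M → |b| ≤ N → ∀ g : ℝ, 0 ≤ g →
      |2 * a * b * g| ≤ 2 * (2*M) * N * g := by
    intro a b c ha hb g hg
    have : |2 * a * b * g| = 2 * |a| * |b| * g := by
      rw [abs_mul, abs_mul, abs_mul, abs_two, abs_of_nonneg hg]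
    rw [this]; gcongr
  have hf₁int : Integrable f₁ μP := by
    refine Integrable.mono (hγP.const_mul (2 * (2*M) * N)) hf₁meas.aestronglyMeasurable
      (Filter.Eventually.of_forall fun p => ?_)
    rw [hf₁def, Real.norm_eq_abs, Real.norm_eq_abs]
    have h1 : |u t p.2 - u t p.1| ≤ 2*M := by
      calc |u t p.2 - u t p.1| ≤ |u t p.2| + |u t p.1| := abs_sub _ _
        _ ≤ 2*M := by linarith [hM t ht' p.2, hM t ht' p.1]
    have := hbnd (u t p.2 - u t p.1) (v t p.2) 0 h1 (hN t ht' p.2) (γ p.1 p.2) (hγnonneg _ _)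
    calc |2 * (u t p.2 - u t p.1) * v t p.2 * γ p.1 p.2| ≤ 2 * (2*M) * N * γ p.1 p.2 := this
      _ ≤ |2 * (2*M) * N * γ p.1 p.2| := le_abs_self _
  have hf₂int : Integrable f₂ μP := by
    refine Integrable.mono (hγP.const_mul (2 * (2*M) * N)) hf₂meas.aestronglyMeasurable
      (Filter.Eventually.of_forall fun p => ?_)
    rw [hf₂def, Real.norm_eq_abs, Real.norm_eq_abs]
    have h1 : |u t p.2 - u t p.1| ≤ 2*M := by
      calc |u t p.2 - u t p.1| ≤ |u t p.2| + |u t p.1| := abs_sub _ _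
        _ ≤ 2*M := by linarith [hM t ht' p.2, hM t ht' p.1]
    have := hbnd (u t p.2 - u t p.1) (v t p.1) 0 h1 (hN t ht' p.1) (γ p.1 p.2) (hγnonneg _ _)
    calc |2 * v t p.1 * ((u t p.2 - u t p.1) * γ p.1 p.2)|
        = |2 * (u t p.2 - u t p.1) * v t p.1 * γ p.1 p.2| := by ring_nf
      _ ≤ 2 * (2*M) * N * γ p.1 p.2 := this
      _ ≤ |2 * (2*M) * N * γ p.1 p.2| := le_abs_self _
  have hsplit : ∫ p, G' t p ∂μP = (∫ p, f₁ p ∂μP) - ∫ p, f₂ p ∂μP := by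
    rw [← integral_sub hf₁int hf₂int]
    refine integral_congr_ae (Filter.Eventually.of_forall fun p => ?_)
    rw [hG'def, hf₁def, hf₂def]; ring
  have hswap : ∫ p, f₁ p ∂μP = - ∫ p, f₂ p ∂μP := by
    have h1 : ∫ p, f₁ p ∂μP = ∫ p, f₁ p.swap ∂μP := (integral_prod_swap f₁).symm
    rw [h1, ← integral_neg]
    refine integral_congr_ae (Filter.Eventually.of_forall fun p => ?_)
    rw [hf₁def, hf₂def]
    simp only [Prod.fst_swap, Prod.snd_swap]
    rw [hγsymm p.2 p.1]; ring
  -- Fubini for f₂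
  have hinner : ∀ x, (∫ y in S, (2 * v t x) * ((u t y - u t x) * γ x y))
      = (2 * v t x) * I t x := by
    intro x
    rw [hIdef, MeasureTheory.integral_const_mul]
  have hfub : ∫ p, f₂ p ∂μP = ∫ x in S, (2 * v t x) * I t x := by
    rw [hμPdef, ← MeasureTheory.integral_integral
      (f := fun x y => (2 * v t x) * ((u t y - u t x) * γ x y)) hf₂int]
    exact integral_congr_ae (Filter.Eventually.of_forall fun x => hinner x)
  have hf2S : Integrable (fun x => (2 * v t x) * I t x) (volume.restrict S) := by
    have h := hf₂int.integral_prod_left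
    exact h.congr (Filter.Eventually.of_forall fun x => hinner x)
  have hSsplit : ∫ x in S, (2 * v t x) * I t x = ∫ x in Ω, (2 * v t x) * I t x := by
    rw [hSdef, setIntegral_union hdisj hΩI ((hf2S.mono_measure (Measure.restrict_mono hΩS le_rfl))) ((hf2S.mono_measure (Measure.restrict_mono hΩIS le_rfl)))]
    have : ∫ x in ΩI, (2 * v t x) * I t x = 0 := by
      rw [setIntegral_congr_fun hΩI (g := fun _ => (0:ℝ))
        (fun x hx => by rw [hvI x hx]; ring)]
      simp
    rw [this, add_zero]
  -- identify the derivative of the kinetic part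
  have hDK : (∫ x in Ω, FK' t x) = 2 * ∫ x in Ω, (2 * v t x) * I t x := by
    rw [← MeasureTheory.integral_const_mul]
    refine setIntegral_congr_fun hΩ fun x _ => ?_
    rw [hFK'def]
    field_simp
  ------------------------------------------------------------------
  -- assemble
  ------------------------------------------------------------------
  have hPiter : (fun τ => (1/2) * ∫ x in Ω ∪ ΩI, ∫ y in Ω ∪ ΩI, (u τ y - u τ x) ^ 2 * γ x y)
      =ᶠ[nhds t] (fun τ => (1/2) * ∫ p, G τ p ∂μP) := by
    filter_upwards [Ioo_mem_nhds ht.1 ht.2] with τ hτ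
    congr 1
    rw [← hSdef, hμPdef,
      ← MeasureTheory.integral_integral (f := fun x y => (u τ y - u τ x) ^ 2 * γ x y)
        (hGint τ ⟨hτ.1.le, hτ.2.le⟩)]
  have h1 : HasDerivAt (fun τ => (1/2) * ∫ x in Ω, ρ * (v τ x) ^ 2)
      ((1/2) * ∫ x in Ω, FK' t x) t := hKder.const_mul (1/2)
  have h2 : HasDerivAt
      (fun τ => (1/2) * ∫ x in Ω ∪ ΩI, ∫ y in Ω ∪ ΩI, (u τ y - u τ x) ^ 2 * γ x y)
      ((1/2) * ∫ p, G' t p ∂μP) t :=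
    (hPder.const_mul (1/2)).congr_of_eventuallyEq hPiter
  have htot := h1.add h2
  have hval : (1/2) * (∫ x in Ω, FK' t x) + (1/2) * (∫ p, G' t p ∂μP) = 0 := by
    rw [hDK, hsplit, hswap, hfub, hSsplit]
    ring
  rw [hval] at htot
  exact htot
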